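/- Let ℓ : ℝ → [0,∞), let U = {x ∈ ℝ : ℓ(x) > 0}, and let G be a countable collection of closed bounded intervals contained in U such that: the union of the intervals in G equals U; every I ∈ G intersects exactly two other members of G (one on its left and one on its right), with the ratio of lengths of any two intersecting intervals of G in [1/2, 2]; any two disjoint intervals I, I′ ∈ G are separated by a distance at least |I|/4; and every I ∈ G satisfies max{|I|, inf_{x∈I} ℓ(x), sup_{x∈I} ℓ(x)} ≤ 6 min{|I|, inf_{x∈I} ℓ(x), sup_{x∈I} ℓ(x)}. Let G_L ⊆ G and for each I ∈ G_L let Λ_I > 0 satisfy Λ_I |I| ≥ 1. Then for every b < 0 and every m ≥ 1 − b there is a constant C, depending only on b and m, such that for all x ∈ U: Σ_{I∈G_L} |I|^b (1 + Λ_I dist(x, I))^{−m} ≤ C (ℓ(x))^b. -/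

import Mathlib

open MeasureTheory Real Set
open scoped ENNReal NNReal Topology Classical

noncomputable section

/-- **Lemma 3.2 (summation lemma).** Let `G` be a Whitney-type collection of intervals for
`ℓ` (covering `U = {ℓ > 0}`, with neighbor, ratio, separation, and `6`-comparability
properties), let `G_L ⊆ G` and `Λ_I |I| ≥ 1` for `I ∈ G_L`.  Then for `b < 0` and
`m ≥ 1 − b` there is `C = C(b, m)` such that for every `x ∈ U`:
`Σ_{I∈G_L} |I|^b (1 + Λ_I d(x,I))^{−m} ≤ C ℓ(x)^b`. -/
theorem whitney_summation
    (b m : ℝ) (hb : b < 0) (hm : 1 - b ≤ m) :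
    ∃ C : ℝ, 0 < C ∧
      ∀ (ℓ : ℝ → ℝ) (G Glarge : Set (ℝ × ℝ)) (Λ : ℝ × ℝ → ℝ),
        (∀ x, 0 ≤ ℓ x) → G.Countable → (∀ I ∈ G, I.1 < I.2) →
        (⋃ I ∈ G, Set.Icc I.1 I.2) = {x : ℝ | 0 < ℓ x} →
        (∀ I ∈ G, ∃ J ∈ G, ∃ K ∈ G, J ≠ I ∧ K ≠ I ∧ J ≠ K ∧
          J.1 < I.1 ∧ I.2 < K.2 ∧
          (Set.Icc J.1 J.2 ∩ Set.Icc I.1 I.2).Nonempty ∧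
          (Set.Icc I.1 I.2 ∩ Set.Icc K.1 K.2).Nonempty ∧
          ∀ L ∈ G, L ≠ I → (Set.Icc L.1 L.2 ∩ Set.Icc I.1 I.2).Nonempty → L = J ∨ L = K) →
        (∀ I ∈ G, ∀ J ∈ G, (Set.Icc I.1 I.2 ∩ Set.Icc J.1 J.2).Nonempty →
          J.2 - J.1 ≤ 2 * (I.2 - I.1)) →
        (∀ I ∈ G, ∀ J ∈ G, Set.Icc I.1 I.2 ∩ Set.Icc J.1 J.2 = ∅ →
          ∀ x ∈ Set.Icc I.1 I.2, ∀ y ∈ Set.Icc J.1 J.2, (I.2 - I.1) / 4 ≤ |x - y|) →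
        (∀ I ∈ G,
          max (I.2 - I.1) (max (sInf (ℓ '' Set.Icc I.1 I.2)) (sSup (ℓ '' Set.Icc I.1 I.2))) ≤
            6 * min (I.2 - I.1)
              (min (sInf (ℓ '' Set.Icc I.1 I.2)) (sSup (ℓ '' Set.Icc I.1 I.2)))) →
        Glarge ⊆ G →
        (∀ I ∈ Glarge, 0 < Λ I ∧ 1 ≤ Λ I * (I.2 - I.1)) →
        ∀ x : ℝ, 0 < ℓ x →
          ∑' I : Glarge,
              ENNReal.ofReal
                (((I : ℝ × ℝ).2 - (I : ℝ × ℝ).1) ^ b *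
                  (1 + Λ I * Metric.infDist x (Set.Icc (I : ℝ × ℝ).1 (I : ℝ × ℝ).2)) ^ (-m)) ≤
            ENNReal.ofReal (C * ℓ x ^ b) := by
  classical
  have hbm1 : (0:ℝ) ≤ b + m - 1 := by linarith
  set C2 : ℝ := 4 ^ (b + m - 1) * 29 ^ (1 - b) with hC2
  have hC2pos : 0 < C2 := by positivity
  refine ⟨3 * 12 ^ (-b) + 6 * C2 / (-b), ?_, ?_⟩
  · have h1 : (0:ℝ) < 3 * 12 ^ (-b) := by positivity
    have h2 : (0:ℝ) < 6 * C2 / (-b) := by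
      apply div_pos (by positivity) (by linarith)
    linarith
  intro ℓ G Gl Λ hℓ0 hGc hlen hcover hnbr hratio hsep hcomp hGl hΛ x hx
  haveI : Countable ↥Gl := (hGc.mono hGl).to_subtype
  set l := ℓ x with hl
  have hlpos : 0 < l := hx
  -- comparability consequences
  have hcomp' : ∀ I ∈ G, ∀ y ∈ Icc I.1 I.2, I.2 - I.1 ≤ 6 * ℓ y ∧ ℓ y ≤ 6 * (I.2 - I.1) := by
    intro I hI y hy
    have hlenI : 0 < I.2 - I.1 := sub_pos.2 (hlen I hI)
    have hbdd : BddBelow (ℓ '' Icc I.1 I.2) := ⟨0, by rintro z ⟨w, -, rfl⟩; exact hℓ0 w⟩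
    have hcompI := hcomp I hI
    have hbddA : BddAbove (ℓ '' Icc I.1 I.2) := by
      by_contra hno
      rw [csSup_of_not_bddAbove hno, Real.sSup_empty] at hcompI
      have h1 : I.2 - I.1 ≤ max (I.2 - I.1) (max (sInf (ℓ '' Icc I.1 I.2)) 0) :=
        le_max_left _ _
      have h2 : min (I.2 - I.1) (min (sInf (ℓ '' Icc I.1 I.2)) 0) ≤ 0 :=
        le_trans (min_le_right _ _) (min_le_right _ _)
      nlinarith
    have h1 : sInf (ℓ '' Icc I.1 I.2) ≤ ℓ y := csInf_le hbdd ⟨y, hy, rfl⟩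
    have h2 : ℓ y ≤ sSup (ℓ '' Icc I.1 I.2) := le_csSup hbddA ⟨y, hy, rfl⟩
    constructor
    · have h3 := le_trans (le_max_left _ _) hcompI
      have h4 : min (I.2 - I.1) (min (sInf (ℓ '' Icc I.1 I.2)) (sSup (ℓ '' Icc I.1 I.2))) ≤
          sInf (ℓ '' Icc I.1 I.2) := le_trans (min_le_right _ _) (min_le_left _ _)
      linarith
    · have h3 := le_trans (le_trans (le_max_right _ _) (le_max_right (I.2 - I.1) _)) hcompI
      have h4 : min (I.2 - I.1) (min (sInf (ℓ '' Icc I.1 I.2)) (sSup (ℓ '' Icc I.1 I.2))) ≤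
          I.2 - I.1 := min_le_left _ _
      linarith
  -- a Whitney interval containing x
  have hxU : x ∈ ⋃ I ∈ G, Icc I.1 I.2 := by rw [hcover]; exact hx
  obtain ⟨I₀, hI₀G, hxI₀⟩ : ∃ I ∈ G, x ∈ Icc I.1 I.2 := by
    rcases mem_iUnion₂.mp hxU with ⟨I, hI, h⟩
    exact ⟨I, hI, h⟩
  have hI₀l : I₀.2 - I₀.1 ≤ 6 * l := (hcomp' I₀ hI₀G x hxI₀).1
  have hlI₀ : l ≤ 6 * (I₀.2 - I₀.1) := (hcomp' I₀ hI₀G x hxI₀).2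
  have hI₀len : 0 < I₀.2 - I₀.1 := sub_pos.2 (hlen I₀ hI₀G)
  -- lower bounds on infDist
  have le_infD : ∀ (I : ℝ × ℝ), I.1 ≤ I.2 → ∀ (c : ℝ),
      (∀ y ∈ Icc I.1 I.2, c ≤ dist x y) → c ≤ Metric.infDist x (Icc I.1 I.2) := by
    intro I hI c h
    by_contra hlt
    push_neg at hlt
    obtain ⟨y, hy, hdy⟩ := (Metric.infDist_lt_iff (Set.nonempty_Icc.mpr hI)).mp hlt
    exact absurd (h y hy) (not_le.mpr hdy)
  -- bounded multiplicity
  have hmult : ∀ t : ℝ, ∃ A : Finset (ℝ × ℝ), A.card ≤ 3 ∧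
      ∀ I ∈ G, t ∈ Icc I.1 I.2 → I ∈ A := by
    intro t
    by_cases hex : ∃ I ∈ G, t ∈ Icc I.1 I.2
    · obtain ⟨I, hIG, htI⟩ := hex
      obtain ⟨J, hJG, K, hKG, hJI, hKI, hJK, -, -, -, -, huniq⟩ := hnbr I hIG
      refine ⟨{I, J, K}, ?_, ?_⟩
      · calc ({I, J, K} : Finset (ℝ × ℝ)).card ≤ ({J, K} : Finset (ℝ × ℝ)).card + 1 :=
            Finset.card_insert_le _ _
          _ ≤ (({K} : Finset (ℝ × ℝ)).card + 1) + 1 :=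
            Nat.add_le_add_right (Finset.card_insert_le _ _) 1
          _ = 3 := by simp
      · intro L hLG htL
        by_cases hLI : L = I
        · simp [hLI]
        · rcases huniq L hLG hLI ⟨t, htL, htI⟩ with h | h <;> simp [h]
    · exact ⟨∅, by simp, fun I hI ht => absurd ⟨I, hI, ht⟩ hex⟩
  -- the neighbors of I₀
  have hA : ∃ A : Finset (ℝ × ℝ), A.card ≤ 3 ∧
      ∀ I ∈ G, (Icc I.1 I.2 ∩ Icc I₀.1 I₀.2).Nonempty → I ∈ A := by
    obtain ⟨J, hJG, K, hKG, hJI, hKI, hJK, -, -, -, -, huniq⟩ := hnbr I₀ hI₀G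
    refine ⟨{I₀, J, K}, ?_, ?_⟩
    · calc ({I₀, J, K} : Finset (ℝ × ℝ)).card ≤ ({J, K} : Finset (ℝ × ℝ)).card + 1 :=
          Finset.card_insert_le _ _
        _ ≤ (({K} : Finset (ℝ × ℝ)).card + 1) + 1 :=
          Nat.add_le_add_right (Finset.card_insert_le _ _) 1
        _ = 3 := by simp
    · intro L hLG hint
      by_cases hLI : L = I₀
      · simp [hLI]
      · rcases huniq L hLG hLI hint with h | h <;> simp [h]
  obtain ⟨A₀, hA₀3, hA₀mem⟩ := hA
  -- the comparison integrand
  set F : ℝ → ℝ≥0∞ := fun t => ENNReal.ofReal ((l + |x - t|) ^ (b - 1)) with hF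
  have hFc : Continuous fun t : ℝ => (l + |x - t|) ^ (b - 1) := by
    have hc : Continuous fun t : ℝ => l + |x - t| :=
      continuous_const.add ((continuous_const.sub continuous_id).abs)
    apply hc.rpow_const
    intro t
    left
    have : 0 ≤ |x - t| := abs_nonneg _
    positivity
  have hFm : Measurable F := ENNReal.measurable_ofReal.comp hFc.measurable
  -- value of the basic integral
  have key0 : ∫⁻ u in Ioi (0:ℝ), ENNReal.ofReal ((l + u) ^ (b - 1)) =
      ENNReal.ofReal (l ^ b / (-b)) := by
    have hemb : MeasurableEmbedding (fun u : ℝ => u + l) :=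
      (MeasurableEquiv.addRight l).measurableEmbedding
    have hmp : MeasurePreserving (fun u : ℝ => u + l) volume volume :=
      measurePreserving_add_right volume l
    have hpre : (fun u : ℝ => u + l) ⁻¹' (Ioi l) = Ioi 0 := by
      ext u; simp
    have h2 := hmp.setLIntegral_comp_preimage_emb hemb
      (fun s => ENNReal.ofReal (s ^ (b - 1))) (Ioi l)
    rw [hpre] at h2
    calc ∫⁻ u in Ioi (0:ℝ), ENNReal.ofReal ((l + u) ^ (b - 1))
        = ∫⁻ u in Ioi (0:ℝ), ENNReal.ofReal ((u + l) ^ (b - 1)) := by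
          simp_rw [add_comm l]
      _ = ∫⁻ s in Ioi l, ENNReal.ofReal (s ^ (b - 1)) := h2
      _ = ENNReal.ofReal (∫ s in Ioi l, s ^ (b - 1)) := by
          rw [← ofReal_integral_eq_lintegral_ofReal
            (integrableOn_Ioi_rpow_of_lt (by linarith) hlpos) ?_]
          filter_upwards [ae_restrict_mem measurableSet_Ioi] with s hs
          exact Real.rpow_nonneg (le_of_lt (lt_trans hlpos hs)) _
      _ = ENNReal.ofReal (l ^ b / (-b)) := by
          rw [integral_Ioi_rpow_of_lt (by linarith) hlpos]
          have hb1 : b - 1 + 1 = b := by ring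
          rw [hb1, neg_div, div_neg]
  have key0' : ∫⁻ u in Ici (0:ℝ), ENNReal.ofReal ((l + |u|) ^ (b - 1)) =
      ENNReal.ofReal (l ^ b / (-b)) := by
    have hres : (volume : Measure ℝ).restrict (Ici (0:ℝ)) = volume.restrict (Ioi 0) :=
      Measure.restrict_congr_set Ioi_ae_eq_Ici.symm
    rw [hres, ← key0]
    refine setLIntegral_congr_fun measurableSet_Ioi (fun u hu => ?_)
    rw [abs_of_pos hu]
  -- left and right halves
  have keyL : ∫⁻ t in Iio x, F t = ENNReal.ofReal (l ^ b / (-b)) := by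
    have hmp : MeasurePreserving (fun u : ℝ => x - u) volume volume :=
      Measure.measurePreserving_sub_left volume x
    have hemb : MeasurableEmbedding (fun u : ℝ => x - u) :=
      (MeasurableEquiv.subLeft x).measurableEmbedding
    have hpre : (fun u : ℝ => x - u) ⁻¹' (Iio x) = Ioi 0 := by
      ext u; simp
    have h2 := hmp.setLIntegral_comp_preimage_emb hemb F (Iio x)
    rw [hpre] at h2
    rw [← h2, ← key0]
    refine setLIntegral_congr_fun measurableSet_Ioi (fun u hu => ?_)
    have hxx : x - (x - u) = u := by ring
    simp only [hF, hxx, abs_of_pos (show (0:ℝ) < u from hu)]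
  have keyR : ∫⁻ t in Ici x, F t = ENNReal.ofReal (l ^ b / (-b)) := by
    have hmp : MeasurePreserving (fun u : ℝ => u + x) volume volume :=
      measurePreserving_add_right volume x
    have hemb : MeasurableEmbedding (fun u : ℝ => u + x) :=
      (MeasurableEquiv.addRight x).measurableEmbedding
    have hpre : (fun u : ℝ => u + x) ⁻¹' (Ici x) = Ici 0 := by
      ext u; simp
    have h2 := hmp.setLIntegral_comp_preimage_emb hemb F (Ici x)
    rw [hpre] at h2
    rw [← h2, ← key0']
    refine setLIntegral_congr_fun measurableSet_Ici (fun u hu => ?_)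
    have hxx : x - (u + x) = -u := by ring
    simp only [hF, hxx, abs_neg]
  have hFR : ∫⁻ t, F t = 2 * ENNReal.ofReal (l ^ b / (-b)) := by
    rw [← lintegral_add_compl F (measurableSet_Iio (a := x)), compl_Iio, keyL, keyR, two_mul]
  -- termwise bound
  set gN : ↥Gl → ℝ≥0∞ := fun i =>
    if (Icc (i : ℝ × ℝ).1 (i : ℝ × ℝ).2 ∩ Icc I₀.1 I₀.2).Nonempty then
      ENNReal.ofReal (12 ^ (-b) * l ^ b) else 0 with hgN
  have hterm : ∀ i : ↥Gl,
      ENNReal.ofReal (((i : ℝ × ℝ).2 - (i : ℝ × ℝ).1) ^ b *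
        (1 + Λ i * Metric.infDist x (Icc (i : ℝ × ℝ).1 (i : ℝ × ℝ).2)) ^ (-m)) ≤
      gN i + ENNReal.ofReal C2 * ∫⁻ t in Icc (i : ℝ × ℝ).1 (i : ℝ × ℝ).2, F t := by
    intro i
    obtain ⟨I, hImem⟩ := i
    have hIG : I ∈ G := hGl hImem
    set L : ℝ := I.2 - I.1 with hLdef
    have hL : 0 < L := sub_pos.2 (hlen I hIG)
    obtain ⟨hΛpos, hΛL⟩ := hΛ I hImem
    set d : ℝ := Metric.infDist x (Icc I.1 I.2) with hd
    have hd0 : 0 ≤ d := Metric.infDist_nonneg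
    by_cases hP : (Icc I.1 I.2 ∩ Icc I₀.1 I₀.2).Nonempty
    · -- near case
      have h1 : (1 + Λ I * d) ^ (-m) ≤ 1 := by
        apply Real.rpow_le_one_of_one_le_of_nonpos
        · nlinarith
        · linarith
      have hl12 : l / 12 ≤ L := by
        have := hratio I hIG I₀ hI₀G hP
        linarith
      have h2 : L ^ b ≤ 12 ^ (-b) * l ^ b := by
        have hstep := Real.rpow_le_rpow_of_nonpos (by positivity : (0:ℝ) < l / 12) hl12 hb.le
        calc L ^ b ≤ (l / 12) ^ b := hstep
          _ = 12 ^ (-b) * l ^ b := by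
              rw [div_eq_mul_inv, Real.mul_rpow hlpos.le (by positivity),
                Real.inv_rpow (by norm_num : (0:ℝ) ≤ 12),
                ← Real.rpow_neg (by norm_num : (0:ℝ) ≤ 12), mul_comm]
      have hle : L ^ b * (1 + Λ I * d) ^ (-m) ≤ 12 ^ (-b) * l ^ b := by
        calc L ^ b * (1 + Λ I * d) ^ (-m) ≤ (12 ^ (-b) * l ^ b) * 1 :=
            mul_le_mul h2 h1 (Real.rpow_nonneg (by nlinarith) _) (by positivity)
          _ = 12 ^ (-b) * l ^ b := mul_one _
      have : gN ⟨I, hImem⟩ = ENNReal.ofReal (12 ^ (-b) * l ^ b) := if_pos hP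
      rw [this]
      exact le_trans (ENNReal.ofReal_le_ofReal hle) le_self_add
    · -- far case
      have hempty : Icc I.1 I.2 ∩ Icc I₀.1 I₀.2 = ∅ := not_nonempty_iff_eq_empty.mp hP
      have hempty' : Icc I₀.1 I₀.2 ∩ Icc I.1 I.2 = ∅ := by rw [Set.inter_comm]; exact hempty
      have hd1 : l / 24 ≤ d := by
        apply le_infD I (hlen I hIG).le
        intro y hy
        have hs := hsep I₀ hI₀G I hIG hempty' x hxI₀ y hy
        rw [Real.dist_eq]
        linarith
      have hd2 : L ≤ 4 * d := by
        have h4 : L / 4 ≤ d := by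
          apply le_infD I (hlen I hIG).le
          intro y hy
          have hs := hsep I hIG I₀ hI₀G hempty y hy x hxI₀
          rw [Real.dist_eq, abs_sub_comm]
          exact hs
        linarith
      have hdpos : 0 < d := lt_of_lt_of_le (by positivity) hd1
      -- pointwise comparison of F on I
      obtain ⟨y0, hy0, hdy0⟩ :=
        isCompact_Icc.exists_infDist_eq_dist (Set.nonempty_Icc.mpr (hlen I hIG).le) x
      have hxt : ∀ t ∈ Icc I.1 I.2, |x - t| ≤ d + L := by
        intro t ht
        have h1 : dist x t ≤ dist x y0 + dist y0 t := dist_triangle _ _ _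
        have h2 : dist y0 t ≤ L := by
          rw [Real.dist_eq]
          rw [abs_le]
          constructor
          · have := hy0.1; have := ht.2; simp only [hLdef]; linarith
          · have := hy0.2; have := ht.1; simp only [hLdef]; linarith
        rw [Real.dist_eq] at h1
        rw [← hdy0] at h1
        linarith
      have hint : ENNReal.ofReal ((29 * d) ^ (b - 1)) * ENNReal.ofReal L ≤
          ∫⁻ t in Icc I.1 I.2, F t := by
        have hpt : ∀ t ∈ Icc I.1 I.2, ENNReal.ofReal ((29 * d) ^ (b - 1)) ≤ F t := by
          intro t ht
          apply ENNReal.ofReal_le_ofReal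
          apply Real.rpow_le_rpow_of_nonpos (by positivity) ?_ (by linarith)
          have := hxt t ht
          linarith
        calc ENNReal.ofReal ((29 * d) ^ (b - 1)) * ENNReal.ofReal L
            = ∫⁻ _ in Icc I.1 I.2, ENNReal.ofReal ((29 * d) ^ (b - 1)) := by
              rw [setLIntegral_const, Real.volume_Icc]
          _ ≤ ∫⁻ t in Icc I.1 I.2, F t := setLIntegral_mono hFm hpt
      -- the real inequality
      have hstep1 : (1 + Λ I * d) ^ (-m) ≤ (L + d) ^ (-m) * L ^ m := by
        have h1L : 1 / L ≤ Λ I := (div_le_iff₀ hL).mpr hΛL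
        have hΛd : d / L ≤ Λ I * d := by
          calc d / L = (1 / L) * d := by ring
            _ ≤ Λ I * d := mul_le_mul_of_nonneg_right h1L hd0
        have hbase : (L + d) / L ≤ 1 + Λ I * d := by
          have hLd : (L + d) / L = 1 + d / L := by field_simp
          linarith
        have h := Real.rpow_le_rpow_of_nonpos (by positivity) hbase (by linarith : -m ≤ 0)
        calc (1 + Λ I * d) ^ (-m) ≤ ((L + d) / L) ^ (-m) := h
          _ = (L + d) ^ (-m) * L ^ m := by
              rw [Real.div_rpow (by positivity) hL.le, Real.rpow_neg hL.le m, div_inv_eq_mul]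
      have e1 : L ^ b * ((L + d) ^ (-m) * L ^ m) = L ^ (b + m) * (L + d) ^ (-m) := by
        rw [Real.rpow_add hL]; ring
      have e2 : (L + d) ^ (-m) ≤ d ^ (-m) :=
        Real.rpow_le_rpow_of_nonpos hdpos (by linarith) (by linarith)
      have e3 : L ^ (b + m) ≤ (4 * d) ^ (b + m - 1) * L := by
        have hsplit : L ^ (b + m) = L ^ (b + m - 1) * L := by
          rw [← Real.rpow_add_one hL.ne' (b + m - 1)]
          ring_nf
        rw [hsplit]
        exact mul_le_mul_of_nonneg_right
          (Real.rpow_le_rpow hL.le hd2 hbm1) hL.le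
      have e4 : (4 * d) ^ (b + m - 1) * d ^ (-m) = 4 ^ (b + m - 1) * d ^ (b - 1) := by
        rw [Real.mul_rpow (by norm_num) hdpos.le, mul_assoc, ← Real.rpow_add hdpos]
        have : b + m - 1 + -m = b - 1 := by ring
        rw [this]
      have e5 : 29 ^ (1 - b) * (29 * d) ^ (b - 1) = d ^ (b - 1) := by
        rw [Real.mul_rpow (by norm_num) hdpos.le, ← mul_assoc,
          ← Real.rpow_add (by norm_num : (0:ℝ) < 29)]
        have : 1 - b + (b - 1) = 0 := by ring
        rw [this, Real.rpow_zero, one_mul]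
      have hfar : L ^ b * (1 + Λ I * d) ^ (-m) ≤ C2 * ((29 * d) ^ (b - 1) * L) := by
        have nn1 : 0 ≤ L ^ b := Real.rpow_nonneg hL.le _
        calc L ^ b * (1 + Λ I * d) ^ (-m)
            ≤ L ^ b * ((L + d) ^ (-m) * L ^ m) := mul_le_mul_of_nonneg_left hstep1 nn1
          _ = L ^ (b + m) * (L + d) ^ (-m) := e1
          _ ≤ L ^ (b + m) * d ^ (-m) :=
            mul_le_mul_of_nonneg_left e2 (Real.rpow_nonneg hL.le _)
          _ ≤ ((4 * d) ^ (b + m - 1) * L) * d ^ (-m) :=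
            mul_le_mul_of_nonneg_right e3 (Real.rpow_nonneg hdpos.le _)
          _ = ((4 * d) ^ (b + m - 1) * d ^ (-m)) * L := by ring
          _ = (4 ^ (b + m - 1) * d ^ (b - 1)) * L := by rw [e4]
          _ = (4 ^ (b + m - 1) * (29 ^ (1 - b) * (29 * d) ^ (b - 1))) * L := by rw [e5]
          _ = C2 * ((29 * d) ^ (b - 1) * L) := by rw [hC2]; ring
      have hzero : gN ⟨I, hImem⟩ = 0 := if_neg hP
      rw [hzero, zero_add]
      calc ENNReal.ofReal (L ^ b * (1 + Λ I * d) ^ (-m))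
          ≤ ENNReal.ofReal (C2 * ((29 * d) ^ (b - 1) * L)) := ENNReal.ofReal_le_ofReal hfar
        _ = ENNReal.ofReal C2 * (ENNReal.ofReal ((29 * d) ^ (b - 1)) * ENNReal.ofReal L) := by
            rw [← ENNReal.ofReal_mul
                (Real.rpow_nonneg (by positivity : (0:ℝ) ≤ 29 * d) (b - 1)),
              ← ENNReal.ofReal_mul hC2pos.le]
        _ ≤ ENNReal.ofReal C2 * ∫⁻ t in Icc I.1 I.2, F t := mul_le_mul_right hint _
  -- sum the near part
  have hgNsum : (∑' i : ↥Gl, gN i) ≤ 3 * ENNReal.ofReal (12 ^ (-b) * l ^ b) := by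
    have hfin : {i : ↥Gl | (i : ℝ × ℝ) ∈ A₀}.Finite :=
      A₀.finite_toSet.preimage (Subtype.coe_injective.injOn)
    rw [tsum_eq_sum (s := hfin.toFinset) ?_]
    · calc ∑ i ∈ hfin.toFinset, gN i
          ≤ ∑ _i ∈ hfin.toFinset, ENNReal.ofReal (12 ^ (-b) * l ^ b) := by
            apply Finset.sum_le_sum
            intro i _
            by_cases h : (Icc (i : ℝ × ℝ).1 (i : ℝ × ℝ).2 ∩ Icc I₀.1 I₀.2).Nonempty
            · simp [hgN, h]
            · simp [hgN, h]
        _ = (hfin.toFinset.card : ℝ≥0∞) * ENNReal.ofReal (12 ^ (-b) * l ^ b) := by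
            rw [Finset.sum_const, nsmul_eq_mul]
        _ ≤ 3 * ENNReal.ofReal (12 ^ (-b) * l ^ b) := by
            apply mul_le_mul_left
            have hcard : hfin.toFinset.card ≤ A₀.card := by
              refine Finset.card_le_card_of_injOn (s := hfin.toFinset) (t := A₀)
                (fun i => (i : ℝ × ℝ)) ?_ ?_
              · intro i hi
                simpa using (hfin.mem_toFinset.mp hi)
              · exact fun i _ j _ h => Subtype.coe_injective h
            exact_mod_cast hcard.trans hA₀3
    · intro i hi
      simp only [Set.Finite.mem_toFinset, Set.mem_setOf_eq] at hi
      apply if_neg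
      intro hP
      exact hi (hA₀mem _ (hGl i.2) hP)
  -- sum the far part via bounded multiplicity
  have hmulti : (∑' i : ↥Gl, ∫⁻ t in Icc (i : ℝ × ℝ).1 (i : ℝ × ℝ).2, F t) ≤
      3 * ∫⁻ t, F t := by
    have heq : ∀ i : ↥Gl, ∫⁻ t in Icc (i : ℝ × ℝ).1 (i : ℝ × ℝ).2, F t =
        ∫⁻ t, (Icc (i : ℝ × ℝ).1 (i : ℝ × ℝ).2).indicator F t :=
      fun i => (lintegral_indicator measurableSet_Icc F).symm
    calc (∑' i : ↥Gl, ∫⁻ t in Icc (i : ℝ × ℝ).1 (i : ℝ × ℝ).2, F t)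
        = ∑' i : ↥Gl, ∫⁻ t, (Icc (i : ℝ × ℝ).1 (i : ℝ × ℝ).2).indicator F t := tsum_congr heq
      _ = ∫⁻ t, ∑' i : ↥Gl, (Icc (i : ℝ × ℝ).1 (i : ℝ × ℝ).2).indicator F t :=
          (lintegral_tsum fun i => (hFm.indicator measurableSet_Icc).aemeasurable).symm
      _ ≤ ∫⁻ t, 3 * F t := by
          apply lintegral_mono
          intro t
          show (∑' i : ↥Gl, (Icc (i : ℝ × ℝ).1 (i : ℝ × ℝ).2).indicator F t) ≤ 3 * F t
          obtain ⟨A, hA3, hAt⟩ := hmult t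
          have hfin : {i : ↥Gl | (i : ℝ × ℝ) ∈ A}.Finite :=
            A.finite_toSet.preimage (Subtype.coe_injective.injOn)
          rw [tsum_eq_sum (s := hfin.toFinset) ?_]
          · calc ∑ i ∈ hfin.toFinset, (Icc (i : ℝ × ℝ).1 (i : ℝ × ℝ).2).indicator F t
                ≤ ∑ _i ∈ hfin.toFinset, F t :=
                  Finset.sum_le_sum fun i _ => Set.indicator_le_self _ _ t
              _ = (hfin.toFinset.card : ℝ≥0∞) * F t := by
                  rw [Finset.sum_const, nsmul_eq_mul]
              _ ≤ 3 * F t := by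
                  apply mul_le_mul_left
                  have hcard : hfin.toFinset.card ≤ A.card := by
                    refine Finset.card_le_card_of_injOn (s := hfin.toFinset) (t := A)
                      (fun i => (i : ℝ × ℝ)) ?_ ?_
                    · intro i hi
                      simpa using (hfin.mem_toFinset.mp hi)
                    · exact fun i _ j _ h => Subtype.coe_injective h
                  exact_mod_cast hcard.trans hA3
          · intro i hi
            simp only [Set.Finite.mem_toFinset, Set.mem_setOf_eq] at hi
            apply Set.indicator_of_notMem
            intro ht
            exact hi (hAt _ (hGl i.2) ht)
      _ = 3 * ∫⁻ t, F t := lintegral_const_mul 3 hFm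
  -- put it together
  have ha1 : (0:ℝ) ≤ 12 ^ (-b) * l ^ b := by positivity
  have ha2 : (0:ℝ) ≤ l ^ b / (-b) :=
    div_nonneg (Real.rpow_nonneg hlpos.le _) (by linarith)
  calc (∑' i : ↥Gl, ENNReal.ofReal (((i : ℝ × ℝ).2 - (i : ℝ × ℝ).1) ^ b *
          (1 + Λ i * Metric.infDist x (Icc (i : ℝ × ℝ).1 (i : ℝ × ℝ).2)) ^ (-m)))
      ≤ ∑' i : ↥Gl, (gN i + ENNReal.ofReal C2 * ∫⁻ t in Icc (i : ℝ × ℝ).1 (i : ℝ × ℝ).2, F t) :=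
        ENNReal.tsum_le_tsum hterm
    _ = (∑' i : ↥Gl, gN i) +
        ∑' i : ↥Gl, ENNReal.ofReal C2 * ∫⁻ t in Icc (i : ℝ × ℝ).1 (i : ℝ × ℝ).2, F t :=
        ENNReal.tsum_add
    _ = (∑' i : ↥Gl, gN i) +
        ENNReal.ofReal C2 * ∑' i : ↥Gl, ∫⁻ t in Icc (i : ℝ × ℝ).1 (i : ℝ × ℝ).2, F t := by
        exact congrArg (fun z => (∑' i : ↥Gl, gN i) + z) ENNReal.tsum_mul_left
    _ ≤ 3 * ENNReal.ofReal (12 ^ (-b) * l ^ b) +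
        ENNReal.ofReal C2 * (3 * (2 * ENNReal.ofReal (l ^ b / (-b)))) := by
        apply add_le_add hgNsum
        apply mul_le_mul_right
        rw [← hFR]
        exact hmulti
    _ = ENNReal.ofReal (3 * (12 ^ (-b) * l ^ b) + C2 * (3 * (2 * (l ^ b / (-b))))) := by
        have h3 : (3 : ℝ≥0∞) = ENNReal.ofReal (3 : ℝ) := by
          rw [ENNReal.ofReal_ofNat]
        have h2 : (2 : ℝ≥0∞) = ENNReal.ofReal (2 : ℝ) := by
          rw [ENNReal.ofReal_ofNat]
        rw [h3, h2,
          ← ENNReal.ofReal_mul (by norm_num : (0:ℝ) ≤ 2),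
          ← ENNReal.ofReal_mul (by norm_num : (0:ℝ) ≤ 3),
          ← ENNReal.ofReal_mul (by norm_num : (0:ℝ) ≤ 3),
          ← ENNReal.ofReal_mul hC2pos.le,
          ← ENNReal.ofReal_add (by positivity) (by positivity)]
    _ ≤ ENNReal.ofReal ((3 * 12 ^ (-b) + 6 * C2 / (-b)) * l ^ b) := by
        apply ENNReal.ofReal_le_ofReal
        have : (3 * 12 ^ (-b) + 6 * C2 / (-b)) * l ^ b =
            3 * (12 ^ (-b) * l ^ b) + C2 * (3 * (2 * (l ^ b / (-b)))) := by
          ring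
        rw [this]
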